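/- Suppose there exists δ1 ∈ (0, δ0] with the following property: for every δ ∈ (0, δ1), every x ∈ ℝ^d with |x| = δ, every t ≥ t0 + k r(δ), and every N-tuple (η₁,…,η_N) ∈ E_{(k)}(δ,x,t), there is an index I ∈ {1,…,N} with τ_I(t,x) > 0 such that any solution v of the auxiliary ODE v'(θ) = f(t+θ, v(θ), η₁(θ), …, η_N(θ)) on [−τ_I(t,x), 0] with v(−τ_I(t,x)) = η_I(0) satisfies either v(0)·x < δ², or v(0)·x = δ² together with v'(0)·x ≤ 0. Then the zero solution of the DDE is Lyapunov stable; moreover, for any δ ∈ (0, δ1), if the initial function satisfies |φ(s)| < δ e^{−L k r(δ)} for all s ∈ [t0 − r(δ), t0], then every solution of the DDE satisfies |u(t)| ≤ δ for all t ≥ t0. -/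

import Mathlib

open Set Filter
open scoped RealInnerProductSpace

/-- A solution of the state-dependent DDE
`u'(t) = f(t, u(t), u(t-τ₁(t,u(t))), …, u(t-τ_N(t,u(t))))` for `t ≥ t0`,
with initial function `φ` on `(-∞, t0]`. -/
def IsSolDDE (d N : ℕ) (t0 : ℝ)
    (f : ℝ → EuclideanSpace ℝ (Fin d) → (Fin N → EuclideanSpace ℝ (Fin d)) →
      EuclideanSpace ℝ (Fin d))
    (τ : Fin N → ℝ → EuclideanSpace ℝ (Fin d) → ℝ)
    (φ u : ℝ → EuclideanSpace ℝ (Fin d)) : Prop :=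
  Continuous u ∧ (∀ t ≤ t0, u t = φ t) ∧
    ∀ t, t0 ≤ t →
      HasDerivWithinAt u (f t (u t) fun i => u (t - τ i t (u t))) (Set.Ici t0) t

section AuxLemmas
open MeasureTheory Topology

/-- First crossing of the norm level `a`. -/
lemma first_crossing {E : Type*} [NormedAddCommGroup E] (u : ℝ → E) (hu : Continuous u)
    (t0 a t' : ℝ) (h0 : ‖u t0‖ < a) (ht' : t0 ≤ t') (ha : a ≤ ‖u t'‖) :
    ∃ s, t0 < s ∧ s ≤ t' ∧ ‖u s‖ = a ∧ ∀ t, t0 ≤ t → t < s → ‖u t‖ < a := by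
  set T : Set ℝ := Ici t0 ∩ (fun t => ‖u t‖) ⁻¹' Ici a with hT
  have hTclosed : IsClosed T := isClosed_Ici.inter (isClosed_Ici.preimage hu.norm)
  have hTne : T.Nonempty := ⟨t', ht', ha⟩
  have hTbdd : BddBelow T := ⟨t0, fun t ht => ht.1⟩
  set s := sInf T with hs
  have hsT : s ∈ T := hTclosed.csInf_mem hTne hTbdd
  have hst0 : t0 ≤ s := le_csInf hTne fun t ht => ht.1
  have hbefore : ∀ t, t0 ≤ t → t < s → ‖u t‖ < a := by
    intro t ht hts
    rcases lt_or_ge (‖u t‖) a with h | h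
    · exact h
    · exact absurd (csInf_le hTbdd ⟨ht, h⟩) (not_le.2 hts)
  have hst0' : t0 < s := lt_of_le_of_ne hst0 (by
    intro h
    rw [← h] at hsT
    exact absurd hsT.2 (not_le.2 h0))
  have hle : ‖u s‖ ≤ a := by
    have htend : Tendsto (fun t => ‖u t‖) (𝓝[<] s) (𝓝 ‖u s‖) :=
      (hu.norm.continuousAt).continuousWithinAt.tendsto
    refine le_of_tendsto htend ?_
    filter_upwards [Ioo_mem_nhdsLT hst0'] with t ht
    exact (hbefore t ht.1.le ht.2).le
  exact ⟨s, hst0', csInf_le hTbdd ⟨ht', ha⟩, le_antisymm hle hsT.2, hbefore⟩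

/-- If `g` is differentiable at `s` and `g ≤ g s` on `[t0, s)`, the derivative is `≥ 0`. -/
lemma deriv_nonneg_of_left_max (g : ℝ → ℝ) (g' s t0 : ℝ) (h : HasDerivAt g g' s)
    (ht0 : t0 < s) (hmax : ∀ t, t0 ≤ t → t < s → g t ≤ g s) : 0 ≤ g' := by
  have htend : Tendsto (slope g s) (𝓝[<] s) (𝓝 g') :=
    (hasDerivAt_iff_tendsto_slope.1 h).mono_left
      (nhdsWithin_mono _ fun t ht => ne_of_lt ht)
  refine ge_of_tendsto htend ?_
  filter_upwards [Ioo_mem_nhdsLT ht0] with t ht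
  have h1 : g t - g s ≤ 0 := sub_nonpos.2 (hmax t ht.1.le ht.2)
  have h2 : t - s < 0 := sub_neg.2 ht.2
  rw [slope_def_field]
  exact div_nonneg_of_nonpos h1 h2.le

/-- Image of a set where the derivative vanishes is Lebesgue-null. -/
lemma image_null_of_deriv_zero (g : ℝ → ℝ) (A : Set ℝ)
    (h : ∀ x ∈ A, HasDerivWithinAt g 0 A x) : volume (g '' A) = 0 := by
  have := MeasureTheory.addHaar_image_eq_zero_of_det_fderivWithin_eq_zero
    (volume : Measure ℝ) (f := g) (s := A) (f' := fun _ => (0 : ℝ →L[ℝ] ℝ))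
    (fun x hx => by
      have h2 : ContinuousLinearMap.toSpanSingleton ℝ (0 : ℝ) = 0 := by
        ext; simp
      have := (h x hx).hasFDerivWithinAt
      rwa [h2] at this)
    (fun x _ => by simp [ContinuousLinearMap.det])
  exact this

/-- A Grönwall-type estimate suitable for delay equations. -/
lemma gronwall_delay {E : Type*} [NormedAddCommGroup E] [NormedSpace ℝ E]
    (u : ℝ → E) (F : ℝ → E) (t0 t1 M L : ℝ) (hL : 0 < L) (hM : 0 ≤ M)
    (hcont : Continuous u)
    (hderiv : ∀ t, t0 < t → t ≤ t1 → HasDerivAt u (F t) t)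
    (hu0 : ‖u t0‖ ≤ M)
    (hbound : ∀ t, t0 < t → t ≤ t1 → ∀ B, M ≤ B →
      (∀ s, t0 ≤ s → s ≤ t → ‖u s‖ ≤ B) → ‖F t‖ ≤ L * B) :
    ∀ t, t0 ≤ t → t ≤ t1 → ‖u t‖ ≤ M * Real.exp (L * (t - t0)) := by
  have key : ∀ ε, 0 < ε → ∀ t, t0 ≤ t → t ≤ t1 →
      ‖u t‖ < (M + ε) * Real.exp ((L + ε) * (t - t0)) := by
    intro ε hε
    by_contra hcon
    push_neg at hcon
    obtain ⟨t', ht'0, ht'1, ht'⟩ := hcon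
    set h : ℝ → ℝ := fun t => (M + ε) * Real.exp ((L + ε) * (t - t0)) with hh
    have hhpos : ∀ t, 0 < h t := fun t =>
      mul_pos (by linarith) (Real.exp_pos _)
    have hhmono : ∀ a b, a ≤ b → h a ≤ h b := by
      intro a b hab
      have : (L + ε) * (a - t0) ≤ (L + ε) * (b - t0) := by nlinarith
      exact mul_le_mul_of_nonneg_left (Real.exp_le_exp.2 this) (by linarith)
    have hhcont : Continuous h :=
      continuous_const.mul
        (Real.continuous_exp.comp (continuous_const.mul (continuous_id.sub continuous_const)))
    have hhderiv : ∀ t, HasDerivAt h ((L + ε) * h t) t := by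
      intro t
      have h1 : HasDerivAt (fun t : ℝ => (L + ε) * (t - t0)) (L + ε) t := by
        simpa using ((hasDerivAt_id t).sub_const t0).const_mul (L + ε)
      have h2 := (h1.exp).const_mul (M + ε)
      have h3 : (M + ε) * (Real.exp ((L + ε) * (t - t0)) * (L + ε)) = (L + ε) * h t := by
        show _ = (L + ε) * ((M + ε) * Real.exp ((L + ε) * (t - t0)))
        ring
      rw [← h3]; exact h2
    -- first crossing of ‖u‖ over h
    set T : Set ℝ := {t | t0 ≤ t ∧ t ≤ t1 ∧ h t ≤ ‖u t‖} with hT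
    have hTclosed : IsClosed T := by
      have : T = Ici t0 ∩ (Iic t1 ∩ {t | h t ≤ ‖u t‖}) := by
        ext t; simp [hT, and_assoc]
      rw [this]
      exact isClosed_Ici.inter (isClosed_Iic.inter
        (isClosed_le hhcont hcont.norm))
    have hTne : T.Nonempty := ⟨t', ht'0, ht'1, ht'⟩
    have hTbdd : BddBelow T := ⟨t0, fun t ht => ht.1⟩
    set c := sInf T with hc
    have hcT : c ∈ T := hTclosed.csInf_mem hTne hTbdd
    have hct0 : t0 ≤ c := le_csInf hTne fun t ht => ht.1
    have hbefore : ∀ t, t0 ≤ t → t < c → ‖u t‖ < h t := by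
      intro t ht htc
      rcases lt_or_ge (‖u t‖) (h t) with hlt | hge
      · exact hlt
      · exact absurd (csInf_le hTbdd ⟨ht, le_trans htc.le hcT.2.1, hge⟩)
          (not_le.2 htc)
    have hct0' : t0 < c := by
      rcases eq_or_lt_of_le hct0 with h0 | h0
      · exfalso
        have h1 : h c ≤ ‖u c‖ := hcT.2.2
        rw [← h0] at h1
        have h2 : h t0 = (M + ε) * Real.exp ((L + ε) * (t0 - t0)) := rfl
        rw [h2] at h1
        simp only [sub_self, mul_zero, Real.exp_zero, mul_one] at h1
        linarith
      · exact h0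
    -- at c, u is on/above h, and equals by continuity
    have huc_ge : h c ≤ ‖u c‖ := hcT.2.2
    have huc_le : ‖u c‖ ≤ h c := by
      have htend : Tendsto (fun t => ‖u t‖ - h t) (𝓝[<] c) (𝓝 (‖u c‖ - h c)) :=
        ((hcont.norm.sub hhcont).continuousAt).continuousWithinAt.tendsto
      have : ‖u c‖ - h c ≤ 0 := by
        refine le_of_tendsto htend ?_
        filter_upwards [Ioo_mem_nhdsLT hct0'] with t ht
        exact sub_nonpos.2 (hbefore t ht.1.le ht.2).le
      linarith
    have huc : ‖u c‖ = h c := le_antisymm huc_le huc_ge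
    -- slope comparison from the left at c
    have hudc : HasDerivAt u (F c) c := hderiv c hct0' hcT.2.1
    have htend_u : Tendsto (fun t => ‖slope u c t‖) (𝓝[<] c) (𝓝 ‖F c‖) := by
      have := (hasDerivAt_iff_tendsto_slope.1 hudc).norm
      exact this.mono_left (nhdsWithin_mono _ fun t ht => ne_of_lt ht)
    have htend_h : Tendsto (slope h c) (𝓝[<] c) (𝓝 ((L + ε) * h c)) :=
      (hasDerivAt_iff_tendsto_slope.1 (hhderiv c)).mono_left
        (nhdsWithin_mono _ fun t ht => ne_of_lt ht)
    have hcomp : (L + ε) * h c ≤ ‖F c‖ := by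
      refine le_of_tendsto_of_tendsto htend_h htend_u ?_
      filter_upwards [Ioo_mem_nhdsLT hct0'] with t ht
      have h1 : ‖u t‖ < h t := hbefore t ht.1.le ht.2
      have htc0 : t - c < 0 := sub_neg.2 ht.2
      have h4 : h c - h t ≤ ‖u t - u c‖ := by
        have h3 : ‖u c‖ - ‖u t‖ ≤ ‖u c - u t‖ := norm_sub_norm_le _ _
        rw [norm_sub_rev] at h3
        linarith
      show slope h c t ≤ ‖slope u c t‖
      have hslope_u : ‖slope u c t‖ = (c - t)⁻¹ * ‖u t - u c‖ := by
        rw [slope_def_module, norm_smul, norm_inv, Real.norm_eq_abs,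
          abs_of_neg htc0, neg_sub]
      have hinv : (t - c)⁻¹ = -(c - t)⁻¹ := by rw [← neg_sub c t, inv_neg]
      have hslope_h : slope h c t = (c - t)⁻¹ * (h c - h t) := by
        rw [slope_def_field, div_eq_inv_mul, hinv]; ring
      rw [hslope_h, hslope_u]
      refine mul_le_mul_of_nonneg_left h4 ?_
      have : (0:ℝ) < c - t := by linarith
      positivity
    -- upper bound on ‖F c‖
    have hFc : ‖F c‖ ≤ L * h c := by
      refine hbound c hct0' hcT.2.1 (h c) ?_ ?_
      · calc M ≤ M + ε := by linarith
          _ ≤ h c := by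
            have h1 : (1:ℝ) ≤ Real.exp ((L + ε) * (c - t0)) := by
              rw [← Real.exp_zero]
              apply Real.exp_le_exp.2
              nlinarith
            have h2 : h c = (M + ε) * Real.exp ((L + ε) * (c - t0)) := rfl
            nlinarith
      · intro s hs0 hsc
        rcases eq_or_lt_of_le hsc with rfl | hlt
        · exact huc.le
        · exact le_trans (hbefore s hs0 hlt).le (hhmono s c hsc)
    have : (L + ε) * h c ≤ L * h c := le_trans hcomp hFc
    nlinarith [hhpos c]
  -- let ε → 0
  intro t ht0 ht1
  have htend : Tendsto (fun ε : ℝ => (M + ε) * Real.exp ((L + ε) * (t - t0)))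
      (𝓝[>] 0) (𝓝 (M * Real.exp (L * (t - t0)))) := by
    have : Continuous fun ε : ℝ => (M + ε) * Real.exp ((L + ε) * (t - t0)) :=
      (continuous_const.add continuous_id).mul
        (Real.continuous_exp.comp ((continuous_const.add continuous_id).mul continuous_const))
    have h0 := this.continuousAt (x := 0)
    have := h0.continuousWithinAt (s := Ioi (0:ℝ))
    simpa using this.tendsto
  refine ge_of_tendsto htend ?_
  filter_upwards [self_mem_nhdsWithin] with ε hε
  exact (key ε hε t ht0 ht1).le

end AuxLemmas

open MeasureTheory Topology

set_option maxHeartbeats 1000000 in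
/-- Theorem 2.4 of Humphries–Magpantay: Lyapunov stability of the zero
solution of a nonautonomous state-dependent DDE via the auxiliary ODE problems. -/
theorem stmt_2
    (d N k : ℕ) (hd : 1 ≤ d) (hN : 1 ≤ N) (hk : 1 ≤ k) (t0 : ℝ)
    (f : ℝ → EuclideanSpace ℝ (Fin d) → (Fin N → EuclideanSpace ℝ (Fin d)) →
      EuclideanSpace ℝ (Fin d))
    (τ : Fin N → ℝ → EuclideanSpace ℝ (Fin d) → ℝ)
    (hfcont : Continuous fun p : ℝ × EuclideanSpace ℝ (Fin d) ×
      (Fin N → EuclideanSpace ℝ (Fin d)) => f p.1 p.2.1 p.2.2)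
    (hτcont : ∀ i, Continuous fun p : ℝ × EuclideanSpace ℝ (Fin d) => τ i p.1 p.2)
    (hf0 : ∀ t, t0 ≤ t → f t 0 0 = 0)
    (hτ0 : ∀ i t x, t0 ≤ t → 0 ≤ τ i t x)
    (τmax : ℝ) (hτmaxpos : 0 < τmax)
    (hτmax : IsLUB {y : ℝ | ∃ i t, t0 ≤ t ∧ y = τ i t 0} τmax)
    (L0 : ℝ) (Li : Fin N → ℝ) (δ0 L : ℝ)
    (hL0 : 0 < L0) (hLi : ∀ i, 0 < Li i) (hδ0 : 0 < δ0)
    (hLdef : L = L0 + ∑ i, Li i)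
    (hLip : ∀ t, t0 ≤ t → ∀ (x x' : EuclideanSpace ℝ (Fin d))
      (v v' : Fin N → EuclideanSpace ℝ (Fin d)),
      ‖x‖ ≤ δ0 → ‖x'‖ ≤ δ0 → (∀ i, ‖v i‖ ≤ δ0) → (∀ i, ‖v' i‖ ≤ δ0) →
      ‖f t x v - f t x' v'‖ ≤ L0 * ‖x - x'‖ + ∑ i, Li i * ‖v i - v' i‖)
    (hτLip : ∀ i, ∃ K : ℝ, 0 ≤ K ∧ ∀ t (x y : EuclideanSpace ℝ (Fin d)), t0 ≤ t →
      ‖x‖ ≤ δ0 → ‖y‖ ≤ δ0 → |τ i t x - τ i t y| ≤ K * ‖x - y‖)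
    -- r(δ) = sup of the delays over t ≥ t0 and ‖u‖ ≤ δ
    (r : ℝ → ℝ)
    (hr : ∀ δ, r δ =
      sSup {y : ℝ | ∃ (i : Fin N) (t : ℝ) (x : EuclideanSpace ℝ (Fin d)), t0 ≤ t ∧ ‖x‖ ≤ δ ∧ y = τ i t x})
    (δ1 : ℝ) (hδ1a : 0 < δ1) (hδ1b : δ1 ≤ δ0)
    -- main hypothesis: for every δ ∈ (0,δ1), |x| = δ, t ≥ t0 + k r(δ) and
    -- (η₁,…,η_N) ∈ E_{(k)}(δ,x,t), there is I with τ_I(t,x) > 0 such that every solution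
    -- of the auxiliary ODE satisfies (2.5) or (2.6)
    (Hmain : ∀ δ : ℝ, 0 < δ → δ < δ1 → ∀ x : EuclideanSpace ℝ (Fin d), ‖x‖ = δ →
      ∀ t : ℝ, t0 + (k : ℝ) * r δ ≤ t →
      ∀ η : Fin N → ℝ → EuclideanSpace ℝ (Fin d),
        ((∀ i, ∀ θ ∈ Icc (-(r δ)) 0, ‖η i θ‖ ≤ δ) ∧
          0 ≤ ⟪x, f t x (fun i => η i 0)⟫ ∧
          ∃ φ u, ContinuousOn φ (Iic t0) ∧ IsSolDDE d N t0 f τ φ u ∧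
            ∀ i, ∀ θ ∈ Icc (-(r δ)) 0, η i θ = u (t + θ - τ i (t + θ) (u (t + θ)))) →
        ∃ I : Fin N, 0 < τ I t x ∧
          ∀ v : ℝ → EuclideanSpace ℝ (Fin d),
            (v (-(τ I t x)) = η I 0 ∧
              ∀ θ ∈ Icc (-(τ I t x)) 0,
                HasDerivWithinAt v (f (t + θ) (v θ) fun i => η i θ)
                  (Icc (-(τ I t x)) 0) θ) →
            (⟪v 0, x⟫ < δ ^ 2 ∨
              (⟪v 0, x⟫ = δ ^ 2 ∧ ⟪f t (v 0) (fun i => η i 0), x⟫ ≤ 0))) :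
    -- conclusion: Lyapunov stability of the zero solution, and the quantitative bound
    (∀ ε > (0 : ℝ), ∃ ρ > (0 : ℝ), ∀ φ u, ContinuousOn φ (Iic t0) →
      IsSolDDE d N t0 f τ φ u → (∀ s ≤ t0, ‖φ s‖ < ρ) → ∀ t ≥ t0, ‖u t‖ ≤ ε) ∧
    (∀ δ : ℝ, 0 < δ → δ < δ1 →
      ∀ φ u, ContinuousOn φ (Iic t0) → IsSolDDE d N t0 f τ φ u →
        (∀ s ∈ Icc (t0 - r δ) t0, ‖φ s‖ < δ * Real.exp (-(L * ((k : ℝ) * r δ)))) →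
        ∀ t ≥ t0, ‖u t‖ ≤ δ) := by
  classical
  have hKc := fun i => (hτLip i).choose_spec
  set Kc : Fin N → ℝ := fun i => (hτLip i).choose with hKcdef
  set S : ℝ := ∑ i, Kc i with hSdef
  have hS0 : 0 ≤ S := Finset.sum_nonneg fun i _ => (hKc i).1
  have hLpos : 0 < L := by
    rw [hLdef]
    have : (0:ℝ) ≤ ∑ i, Li i := Finset.sum_nonneg fun i _ => (hLi i).le
    linarith
  have hk1 : (1:ℝ) ≤ (k:ℝ) := by exact_mod_cast hk
  set i0 : Fin N := ⟨0, hN⟩ with hi0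
  have hτ_le_τmax : ∀ i t, t0 ≤ t → τ i t 0 ≤ τmax := fun i t ht =>
    hτmax.1 ⟨i, t, ht, rfl⟩
  -- the defining set of r δ and its basic properties
  have hRbdd : ∀ δ, 0 ≤ δ → δ ≤ δ0 →
      ∀ y ∈ {y : ℝ | ∃ (i : Fin N) (t : ℝ) (x : EuclideanSpace ℝ (Fin d)),
        t0 ≤ t ∧ ‖x‖ ≤ δ ∧ y = τ i t x}, y ≤ τmax + S * δ := by
    rintro δ hδ hδδ0 y ⟨i, t, x, ht, hx, rfl⟩
    have h1 : |τ i t x - τ i t 0| ≤ Kc i * ‖x - 0‖ :=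
      (hKc i).2 t x 0 ht (le_trans hx hδδ0) (by simp [hδ0.le])
    have h2 : τ i t x ≤ τ i t 0 + Kc i * ‖x‖ := by
      rw [sub_zero] at h1
      have := (abs_le.1 h1).2
      linarith
    have h3 : Kc i * ‖x‖ ≤ S * δ :=
      mul_le_mul (Finset.single_le_sum (fun j _ => (hKc j).1) (Finset.mem_univ i))
        hx (norm_nonneg _) hS0
    have h4 := hτ_le_τmax i t ht
    linarith
  have hrUB : ∀ δ, 0 ≤ δ → δ ≤ δ0 → ∀ i t x, t0 ≤ t → ‖x‖ ≤ δ → τ i t x ≤ r δ := by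
    intro δ hδ hδδ0 i t x ht hx
    rw [hr δ]
    exact le_csSup ⟨τmax + S * δ, fun y hy => hRbdd δ hδ hδδ0 y hy⟩ ⟨i, t, x, ht, hx, rfl⟩
  have hrmax : ∀ δ, 0 ≤ δ → δ ≤ δ0 → τmax ≤ r δ := by
    intro δ hδ hδδ0
    refine hτmax.2 ?_
    rintro y ⟨i, t, ht, rfl⟩
    exact hrUB δ hδ hδδ0 i t 0 ht (by simp [hδ])
  have hrpos : ∀ δ, 0 ≤ δ → δ ≤ δ0 → 0 < r δ := fun δ h1 h2 =>
    lt_of_lt_of_le hτmaxpos (hrmax δ h1 h2)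
  have hrLip : ∀ δ δ'', 0 < δ → δ ≤ δ'' → δ'' ≤ δ0 → r δ'' ≤ r δ + S * (δ'' - δ) := by
    intro δ δ'' hδ hδδ'' hδ''δ0
    have hδ''pos : 0 < δ'' := lt_of_lt_of_le hδ hδδ''
    rw [hr δ'']
    apply csSup_le
    · exact ⟨τ i0 t0 0, i0, t0, 0, le_rfl, by simp [hδ''pos.le], rfl⟩
    · rintro y ⟨i, t, x, ht, hx, rfl⟩
      set y' : EuclideanSpace ℝ (Fin d) := (δ/δ'') • x with hy'
      have hfrac0 : 0 ≤ δ/δ'' := by positivity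
      have hfrac1 : δ/δ'' ≤ 1 := by
        rw [div_le_one hδ''pos]; exact hδδ''
      have hy'norm : ‖y'‖ ≤ δ := by
        rw [hy', norm_smul, Real.norm_eq_abs, abs_of_nonneg hfrac0]
        calc δ/δ'' * ‖x‖ ≤ δ/δ'' * δ'' := by
              exact mul_le_mul_of_nonneg_left hx hfrac0
          _ = δ := by field_simp
      have h1 : |τ i t x - τ i t y'| ≤ Kc i * ‖x - y'‖ :=
        (hKc i).2 t x y' ht (le_trans hx hδ''δ0)
          (le_trans hy'norm (le_trans hδδ'' hδ''δ0))
      have hxy' : ‖x - y'‖ ≤ δ'' - δ := by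
        have : x - y' = (1 - δ/δ'') • x := by
          rw [hy', sub_smul, one_smul]
        rw [this, norm_smul, Real.norm_eq_abs, abs_of_nonneg (by linarith)]
        calc (1 - δ/δ'') * ‖x‖ ≤ (1 - δ/δ'') * δ'' := by
              exact mul_le_mul_of_nonneg_left hx (by linarith)
          _ = δ'' - δ := by field_simp
      have h2 : τ i t x ≤ τ i t y' + Kc i * ‖x - y'‖ := by
        have := (abs_le.1 h1).2; linarith
      have h3 : τ i t y' ≤ r δ := hrUB δ hδ.le (le_trans hδδ'' hδ''δ0) i t y' ht hy'norm
      have h4 : Kc i * ‖x - y'‖ ≤ S * (δ'' - δ) :=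
        mul_le_mul (Finset.single_le_sum (fun j _ => (hKc j).1) (Finset.mem_univ i))
          hxy' (norm_nonneg _) hS0
      linarith
  -- ======== Part 2 ========
  have part2 : ∀ δ : ℝ, 0 < δ → δ < δ1 →
      ∀ φ u, ContinuousOn φ (Iic t0) → IsSolDDE d N t0 f τ φ u →
        (∀ s ∈ Icc (t0 - r δ) t0, ‖φ s‖ < δ * Real.exp (-(L * ((k : ℝ) * r δ)))) →
        ∀ t ≥ t0, ‖u t‖ ≤ δ := by
    intro δ hδpos hδδ1 φ u hφ hsol hφsmall t ht
    by_contra hcon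
    push_neg at hcon
    obtain ⟨hucont, huφ, huode⟩ := hsol
    have hδδ0 : δ ≤ δ0 := le_trans hδδ1.le hδ1b
    have hrδpos : 0 < r δ := hrpos δ hδpos.le hδδ0
    have hrδ0 : 0 ≤ r δ := hrδpos.le
    set β : ℝ := δ * Real.exp (-(L * ((k:ℝ) * r δ))) with hβ
    have hβpos : 0 < β := mul_pos hδpos (Real.exp_pos _)
    have hβδ : β < δ := by
      have h1 : Real.exp (-(L * ((k:ℝ) * r δ))) < 1 := by
        rw [Real.exp_lt_one_iff]
        have h2 : 0 < (k:ℝ) * r δ := mul_pos (by linarith) hrδpos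
        have h3 : 0 < L * ((k:ℝ) * r δ) := mul_pos hLpos h2
        linarith
      calc β = δ * Real.exp (-(L * ((k:ℝ) * r δ))) := rfl
        _ < δ * 1 := by exact mul_lt_mul_of_pos_left h1 hδpos
        _ = δ := mul_one δ
    -- maximum of φ on the initial interval
    obtain ⟨sM, hsM, hsMmax⟩ := (isCompact_Icc (a := t0 - r δ) (b := t0)).exists_isMaxOn
      (nonempty_Icc.2 (by linarith)) ((hφ.norm).mono Icc_subset_Iic_self)
    set M : ℝ := ‖φ sM‖ with hM
    have hMβ : M < β := hφsmall sM hsM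
    have hM0 : 0 ≤ M := norm_nonneg _
    have hMφ : ∀ s, t0 - r δ ≤ s → s ≤ t0 → ‖φ s‖ ≤ M := fun s h1 h2 => hsMmax ⟨h1, h2⟩
    have hut0 : ‖u t0‖ ≤ M := by rw [huφ t0 le_rfl]; exact hMφ t0 (by linarith) le_rfl
    have hut0δ : ‖u t0‖ < δ := by linarith
    -- first crossing of level δ
    obtain ⟨t1, ht1a, ht1b, ht1c, ht1d⟩ :=
      first_crossing u hucont t0 δ t hut0δ ht hcon.le
    have hu_le_t1 : ∀ s, t0 ≤ s → s ≤ t1 → ‖u s‖ ≤ δ := by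
      intro s h1 h2
      rcases eq_or_lt_of_le h2 with h2' | h2'
      · rw [h2']; exact ht1c.le
      · exact (ht1d s h1 h2').le
    -- the vector field along the solution
    set F : ℝ → EuclideanSpace ℝ (Fin d) :=
      fun w => f w (u w) (fun i => u (w - τ i w (u w))) with hF
    have hu_deriv : ∀ w, t0 < w → HasDerivAt u (F w) w := fun w hw =>
      (huode w hw.le).hasDerivAt (Ici_mem_nhds hw)
    -- Gronwall estimate on [t0, t1]
    have hgron : ∀ s, t0 ≤ s → s ≤ t1 → ‖u s‖ ≤ M * Real.exp (L * (s - t0)) := by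
      refine gronwall_delay u F t0 t1 M L hLpos hM0 hucont
        (fun w h1 _ => hu_deriv w h1) hut0 ?_
      intro c hc0 hc1 B hMB hhist
      have hucB : ‖u c‖ ≤ B := hhist c hc0.le le_rfl
      have hucδ : ‖u c‖ ≤ δ := hu_le_t1 c hc0.le hc1
      have hdel : ∀ i : Fin N, ‖u (c - τ i c (u c))‖ ≤ B ∧ ‖u (c - τ i c (u c))‖ ≤ δ := by
        intro i
        have hτle : τ i c (u c) ≤ r δ := hrUB δ hδpos.le hδδ0 i c (u c) hc0.le hucδ
        have hτnn : 0 ≤ τ i c (u c) := hτ0 i c (u c) hc0.le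
        set σ := c - τ i c (u c) with hσ
        have hσc : σ ≤ c := by simp [hσ]; linarith
        rcases le_or_gt t0 σ with h | h
        · exact ⟨hhist σ h hσc, hu_le_t1 σ h (by linarith)⟩
        · have huσ : u σ = φ σ := huφ σ h.le
          have hσlow : t0 - r δ ≤ σ := by simp only [hσ]; linarith
          have := hMφ σ hσlow h.le
          rw [huσ]
          exact ⟨by linarith, by linarith⟩
      have hFle : ‖F c‖ ≤ L0 * ‖u c‖ + ∑ i, Li i * ‖u (c - τ i c (u c))‖ := by
        have h0 := hLip c hc0.le (u c) 0 (fun i => u (c - τ i c (u c))) 0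
          (le_trans hucδ hδδ0) (by simp [hδ0.le])
          (fun i => le_trans (hdel i).2 hδδ0)
          (fun i => by rw [Pi.zero_apply, norm_zero]; exact hδ0.le)
        rw [hf0 c hc0.le, sub_zero] at h0
        simpa using h0
      calc ‖F c‖ ≤ L0 * ‖u c‖ + ∑ i, Li i * ‖u (c - τ i c (u c))‖ := hFle
        _ ≤ L0 * B + ∑ i, Li i * B :=
            add_le_add (mul_le_mul_of_nonneg_left hucB hL0.le)
              (Finset.sum_le_sum fun i _ =>
                mul_le_mul_of_nonneg_left (hdel i).1 (hLi i).le)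
        _ = L * B := by rw [hLdef, add_mul, Finset.sum_mul]
    have ht1k : t0 + (k:ℝ) * r δ < t1 := by
      have h1 : δ ≤ M * Real.exp (L * (t1 - t0)) := by
        rw [← ht1c]; exact hgron t1 ht1a.le le_rfl
      have h2 : M * Real.exp (L * (t1 - t0)) < β * Real.exp (L * (t1 - t0)) :=
        mul_lt_mul_of_pos_right hMβ (Real.exp_pos _)
      have h3 : β * Real.exp (L * (t1 - t0)) =
          δ * Real.exp (L * (t1 - t0) - L * ((k:ℝ) * r δ)) := by
        rw [hβ, mul_assoc, ← Real.exp_add]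
        ring_nf
      have h4 : (1:ℝ) < Real.exp (L * (t1 - t0) - L * ((k:ℝ) * r δ)) := by
        rw [h3] at h2
        have h5 : δ * 1 < δ * Real.exp (L * (t1 - t0) - L * ((k:ℝ) * r δ)) := by linarith
        exact lt_of_mul_lt_mul_left h5 hδpos.le
      have h6 : 0 < L * (t1 - t0) - L * ((k:ℝ) * r δ) := Real.one_lt_exp_iff.1 h4
      have h7 : L * ((k:ℝ) * r δ) < L * (t1 - t0) := by linarith
      have h8 := lt_of_mul_lt_mul_left h7 hLpos.le
      linarith
    -- margin and ceiling level
    set m : ℝ := t1 - (t0 + (k:ℝ) * r δ) with hm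
    have hmpos : 0 < m := by simp only [hm]; linarith
    have hkpos : (0:ℝ) < (k:ℝ) := by linarith
    set Cδ : ℝ := min (min ((δ + δ1)/2) ‖u t‖)
      (δ + min (m / ((k:ℝ)*(S+1))) (r δ / (S+1))) with hCδ
    have hCa : δ < Cδ := by
      refine lt_min (lt_min (by linarith) hcon) ?_
      have h1 : 0 < m / ((k:ℝ)*(S+1)) := div_pos hmpos (by positivity)
      have h2 : 0 < r δ / (S+1) := div_pos hrδpos (by positivity)
      have := lt_min h1 h2
      linarith
    have hCb : Cδ < δ1 :=
      lt_of_le_of_lt (le_trans (min_le_left _ _) (min_le_left _ _)) (by linarith)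
    have hCc : Cδ ≤ ‖u t‖ := le_trans (min_le_left _ _) (min_le_right _ _)
    have hCδ0 : Cδ ≤ δ0 := le_trans hCb.le hδ1b
    have hCm : Cδ - δ ≤ m / ((k:ℝ)*(S+1)) := by
      have h1 := min_le_right (min ((δ + δ1)/2) ‖u t‖)
        (δ + min (m / ((k:ℝ)*(S+1))) (r δ / (S+1)))
      have h2 := min_le_left (m / ((k:ℝ)*(S+1))) (r δ / (S+1))
      rw [← hCδ] at h1
      linarith
    have hCr : Cδ - δ ≤ r δ / (S+1) := by
      have h1 := min_le_right (min ((δ + δ1)/2) ‖u t‖)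
        (δ + min (m / ((k:ℝ)*(S+1))) (r δ / (S+1)))
      have h2 := min_le_right (m / ((k:ℝ)*(S+1))) (r δ / (S+1))
      rw [← hCδ] at h1
      linarith
    -- uniform bounds for levels δ'' ∈ (δ, Cδ]
    have hbounds : ∀ δ'', δ < δ'' → δ'' ≤ Cδ →
        (k:ℝ) * r δ'' < t1 - t0 ∧ r δ'' ≤ 2 * r δ := by
      intro δ'' h1 h2
      have hδ''δ0 : δ'' ≤ δ0 := le_trans h2 hCδ0
      have hlip := hrLip δ δ'' hδpos h1.le hδ''δ0
      constructor
      · have hd : δ'' - δ ≤ m / ((k:ℝ)*(S+1)) := by linarith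
        have h5 : S * (δ'' - δ) ≤ S * (m / ((k:ℝ)*(S+1))) :=
          mul_le_mul_of_nonneg_left hd hS0
        have h6 : (k:ℝ) * (S * (m / ((k:ℝ)*(S+1)))) = m * S / (S+1) := by
          field_simp
        have h7 : m * S / (S+1) < m := by
          rw [div_lt_iff₀ (by positivity)]
          have hq : m * (S + 1) = m * S + m := by ring
          linarith
        have h8 : (k:ℝ) * r δ'' ≤ (k:ℝ) * (r δ + S * (δ'' - δ)) :=
          mul_le_mul_of_nonneg_left hlip hkpos.le
        have h9 : (k:ℝ) * (S * (δ'' - δ)) ≤ (k:ℝ) * (S * (m / ((k:ℝ)*(S+1)))) :=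
          mul_le_mul_of_nonneg_left h5 hkpos.le
        have h10 : (k:ℝ) * (r δ + S * (δ'' - δ)) =
            (k:ℝ) * r δ + (k:ℝ) * (S * (δ'' - δ)) := by ring
        have hmm : t1 - t0 = (k:ℝ) * r δ + m := by simp only [hm]; ring
        linarith
      · have hd : δ'' - δ ≤ r δ / (S+1) := by linarith
        have h5 : S * (δ'' - δ) ≤ S * (r δ / (S+1)) :=
          mul_le_mul_of_nonneg_left hd hS0
        have h6 : S * (r δ / (S+1)) ≤ r δ := by
          rw [mul_div_assoc']
          rw [div_le_iff₀ (by positivity)]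
          have hq : r δ * (S + 1) = S * r δ + r δ := by ring
          linarith
        linarith
    -- crossing of level Cδ
    obtain ⟨t2, ht2a, ht2b, ht2c, ht2d⟩ :=
      first_crossing u hucont t0 Cδ t (by linarith) ht hCc
    -- the squared norm and its derivative
    set g : ℝ → ℝ := fun w => ⟪u w, u w⟫ with hg
    have hg_norm : ∀ w, g w = ‖u w‖^2 := fun w => real_inner_self_eq_norm_sq _
    have hg_deriv : ∀ w, t0 < w → HasDerivAt g (2 * ⟪u w, F w⟫) w := by
      intro w hw
      have h1 := HasDerivAt.inner ℝ (hu_deriv w hw) (hu_deriv w hw)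
      have h2 : 2 * ⟪u w, F w⟫ = ⟪u w, F w⟫ + ⟪F w, u w⟫ := by
        rw [real_inner_comm (F w) (u w)]; ring
      rw [h2]; exact h1
    -- per-level claim
    have claim : ∀ c, δ^2 < c → c < Cδ^2 →
        ∃ s', t1 ≤ s' ∧ s' ≤ t2 ∧ g s' = c ∧ ⟪u s', F s'⟫ = 0 := by
      intro c hc1 hc2
      set δ'' := Real.sqrt c with hδ''def
      have hcpos : 0 < c := lt_trans (pow_pos hδpos 2) hc1
      have hCpos : 0 < Cδ := lt_trans hδpos hCa
      have hδ''a : δ < δ'' := (Real.lt_sqrt hδpos.le).2 hc1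
      have hδ''b : δ'' < Cδ := (Real.sqrt_lt' hCpos).2 hc2
      have hδ''sq : δ''^2 = c := Real.sq_sqrt hcpos.le
      have hδ''pos : 0 < δ'' := lt_trans hδpos hδ''a
      have hδ''δ0 : δ'' ≤ δ0 := le_trans hδ''b.le hCδ0
      obtain ⟨hb1, hb2⟩ := hbounds δ'' hδ''a hδ''b.le
      have hrδ''0 : 0 < r δ'' := hrpos δ'' hδ''pos.le hδ''δ0
      obtain ⟨s, hsa, hsb, hsc, hsd⟩ := first_crossing u hucont t0 δ'' t2
        (by linarith) ht2a.le (by rw [ht2c]; exact hδ''b.le)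
      have hu_le_s : ∀ w, t0 ≤ w → w ≤ s → ‖u w‖ ≤ δ'' := by
        intro w h1 h2
        rcases eq_or_lt_of_le h2 with h2' | h2'
        · rw [h2']; exact hsc.le
        · exact (hsd w h1 h2').le
      have hs_t1 : t1 ≤ s := by
        by_contra hno
        push_neg at hno
        have := ht1d s hsa.le hno
        rw [hsc] at this
        linarith
      have hks : t0 + (k:ℝ) * r δ'' < s := by linarith
      have hkr'' : r δ'' ≤ (k:ℝ) * r δ'' := le_mul_of_one_le_left hrδ''0.le hk1
      set x := u s with hxdef
      have hxnorm : ‖x‖ = δ'' := hsc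
      set η : Fin N → ℝ → EuclideanSpace ℝ (Fin d) :=
        fun i θ => u (s + θ - τ i (s + θ) (u (s + θ))) with hη
      have hη_bound : ∀ i, ∀ θ ∈ Icc (-(r δ'')) 0, ‖η i θ‖ ≤ δ'' := by
        intro i θ hθ
        obtain ⟨hθ1, hθ2⟩ := hθ
        have hw1 : t0 ≤ s + θ := by linarith
        have hw2 : s + θ ≤ s := by linarith
        have huw : ‖u (s + θ)‖ ≤ δ'' := hu_le_s (s + θ) hw1 hw2
        have hτw0 : 0 ≤ τ i (s + θ) (u (s + θ)) := hτ0 i (s + θ) (u (s + θ)) hw1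
        have hτwr : τ i (s + θ) (u (s + θ)) ≤ r δ'' :=
          hrUB δ'' hδ''pos.le hδ''δ0 i (s + θ) (u (s + θ)) hw1 huw
        show ‖u (s + θ - τ i (s + θ) (u (s + θ)))‖ ≤ δ''
        set σ := s + θ - τ i (s + θ) (u (s + θ)) with hσ
        have hσs : σ ≤ s := by simp only [hσ]; linarith
        rcases le_or_gt t0 σ with hcase | hcase
        · exact hu_le_s σ hcase hσs
        · have huσ : u σ = φ σ := huφ σ hcase.le
          have hσlow : t0 - r δ ≤ σ := by
            rcases le_or_gt (‖u (s + θ)‖) δ with hle | hgt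
            · have h5 : τ i (s + θ) (u (s + θ)) ≤ r δ :=
                hrUB δ hδpos.le hδδ0 i (s + θ) (u (s + θ)) hw1 hle
              simp only [hσ]; linarith
            · have hwt1 : t1 ≤ s + θ := by
                by_contra hno
                push_neg at hno
                exact absurd (ht1d (s + θ) hw1 hno) (not_lt.2 hgt.le)
              have h5 : r δ ≤ (k:ℝ) * r δ := le_mul_of_one_le_left hrδ0 hk1
              simp only [hσ]
              linarith
          rw [huσ]
          have := hMφ σ hσlow hcase.le
          linarith
      have heqFs : f s x (fun i => η i 0) = F s := by
        simp only [hη, hF, add_zero, hxdef]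
      have hgFs : 0 ≤ ⟪u s, F s⟫ := by
        have h1 : HasDerivAt g (2 * ⟪u s, F s⟫) s := hg_deriv s (by linarith)
        have h2 : 0 ≤ 2 * ⟪u s, F s⟫ := by
          refine deriv_nonneg_of_left_max g _ s t0 h1 (by linarith) ?_
          intro w hw1 hw2
          have h3 := hsd w hw1 hw2
          rw [hg_norm, hg_norm, hsc]
          exact pow_le_pow_left₀ (norm_nonneg _) h3.le 2
        linarith
      have hpos_inner : 0 ≤ ⟪x, f s x (fun i => η i 0)⟫ := by
        rw [heqFs, hxdef]
        exact hgFs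
      obtain ⟨I, hIpos, hIv⟩ := Hmain δ'' hδ''pos (lt_trans hδ''b hCb) x hxnorm s hks.le η
        ⟨hη_bound, hpos_inner,
          ⟨φ, u, hφ, ⟨hucont, huφ, huode⟩, fun i θ _ => rfl⟩⟩
      have hτIr : τ I s x ≤ r δ'' :=
        hrUB δ'' hδ''pos.le hδ''δ0 I s x (by linarith) (le_of_eq hxnorm)
      set v : ℝ → EuclideanSpace ℝ (Fin d) := fun θ => u (s + θ) with hv
      have hv1 : v (-(τ I s x)) = η I 0 := by
        simp only [hv, hη, add_zero, hxdef]
        congr 1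
      have hv2 : ∀ θ ∈ Icc (-(τ I s x)) 0,
          HasDerivWithinAt v (f (s + θ) (v θ) fun i => η i θ) (Icc (-(τ I s x)) 0) θ := by
        intro θ hθ
        obtain ⟨hθ1, hθ2⟩ := hθ
        have hw1 : t0 < s + θ := by linarith
        have hd := hu_deriv (s + θ) hw1
        have h2 : HasDerivAt (fun θ : ℝ => s + θ) 1 θ := by
          simpa using (hasDerivAt_id θ).const_add s
        have h3 := HasDerivAt.scomp θ hd h2
        have hcomp : HasDerivAt v (F (s + θ)) θ := by
          rw [one_smul] at h3; exact h3
        have heq : F (s + θ) = f (s + θ) (v θ) fun i => η i θ := rfl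
        rw [heq] at hcomp
        exact hcomp.hasDerivWithinAt
      have hres := hIv v ⟨hv1, hv2⟩
      have hv0 : v 0 = x := by
        simp only [hv, add_zero, hxdef]
      have hvx : ⟪v 0, x⟫ = δ''^2 := by
        rw [hv0, real_inner_self_eq_norm_sq, hxnorm]
      rcases hres with hlt | ⟨_, h2⟩
      · rw [hvx] at hlt
        exact absurd hlt (lt_irrefl _)
      · refine ⟨s, hs_t1, hsb, ?_, ?_⟩
        · rw [hg_norm, hsc, hδ''sq]
        · have h3 : ⟪F s, u s⟫ ≤ 0 := by
            rw [hv0, heqFs, hxdef] at h2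
            exact h2
          rw [real_inner_comm] at h3
          linarith
    -- the contradiction via the Sard-type lemma
    set A : Set ℝ := {w | w ∈ Icc t1 t2 ∧ ⟪u w, F w⟫ = 0} with hA
    have hAderiv : ∀ w ∈ A, HasDerivWithinAt g 0 A w := by
      intro w hw
      have h1 : HasDerivAt g (2 * ⟪u w, F w⟫) w := hg_deriv w (by
        have := hw.1.1
        linarith)
      rw [hw.2, mul_zero] at h1
      exact h1.hasDerivWithinAt
    have hnull : volume (g '' A) = 0 := image_null_of_deriv_zero g A hAderiv
    have hsub : Ioo (δ^2) (Cδ^2) ⊆ g '' A := by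
      intro c hc
      obtain ⟨s', h1, h2, h3, h4⟩ := claim c hc.1 hc.2
      exact ⟨s', ⟨⟨h1, h2⟩, h4⟩, h3⟩
    have hvol : volume (Ioo (δ^2) (Cδ^2)) = 0 :=
      le_antisymm (le_trans (measure_mono hsub) hnull.le) (by simp)
    rw [Real.volume_Ioo] at hvol
    have hlt : δ^2 < Cδ^2 := by
      have := pow_lt_pow_left₀ hCa hδpos.le two_ne_zero
      exact this
    rw [ENNReal.ofReal_eq_zero] at hvol
    linarith
  -- ======== Part 1 from Part 2 ========
  refine ⟨?_, part2⟩
  intro ε hε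
  set δ' : ℝ := min ε δ1 / 2 with hδ'
  have hδ'pos : 0 < δ' := by
    have := lt_min hε hδ1a
    simp only [hδ']
    linarith
  have hδ'δ1 : δ' < δ1 := by
    have h1 : min ε δ1 ≤ δ1 := min_le_right _ _
    simp only [hδ']
    linarith
  have hδ'ε : δ' ≤ ε := by
    have h1 : min ε δ1 ≤ ε := min_le_left _ _
    simp only [hδ']
    linarith
  refine ⟨δ' * Real.exp (-(L * ((k:ℝ) * r δ'))), mul_pos hδ'pos (Real.exp_pos _), ?_⟩
  intro φ u hφ hsol hsmall t ht
  exact le_trans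
    (part2 δ' hδ'pos hδ'δ1 φ u hφ hsol (fun s hs => hsmall s hs.2) t ht) hδ'ε
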